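/- For h ∈ ℂ with Re(h) > -1/2 and integer k ≥ 2h+2 (more generally whenever the integral converges), ∫₀^∞ x^{2h}/(1−ix)^k dx = −iπ e^{iπh} (−2h)_{k−1} / ((k−1)! sin(2πh)), where (a)_j is the Pochhammer symbol. -/

import Mathlib

open MeasureTheory Polynomial

open Set Filter Complex

lemma aux_integrableOn (p : ℝ) (n : ℕ) (hp : -1 < p) (hpn : p + 1 < n) :
    IntegrableOn (fun x : ℝ => x ^ p * ((1 + x) ^ n)⁻¹) (Ioi (0:ℝ)) := by
  have hcont : ∀ x ∈ Ioi (0:ℝ), ContinuousWithinAt (fun x : ℝ => x ^ p * ((1 + x) ^ n)⁻¹) (Ioi 0) x := by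
    intro x hx
    have h1 : (0:ℝ) < x := hx
    apply ContinuousWithinAt.mul
    · exact (Real.continuousAt_rpow_const x p (Or.inl h1.ne')).continuousWithinAt
    · apply ContinuousWithinAt.inv₀
      · exact (continuous_const.add continuous_id).continuousWithinAt.pow n
      · positivity
  have hmeas : AEStronglyMeasurable (fun x : ℝ => x ^ p * ((1 + x) ^ n)⁻¹)
      (volume.restrict (Ioi (0:ℝ))) :=
    (ContinuousOn.aestronglyMeasurable hcont measurableSet_Ioi)
  rw [show Ioi (0:ℝ) = Ioc 0 1 ∪ Ioi 1 by rw [Ioc_union_Ioi_eq_Ioi]; norm_num]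
  apply IntegrableOn.union
  · have hbase : IntegrableOn (fun x : ℝ => x ^ p) (Ioc (0:ℝ) 1) := by
      have := (intervalIntegral.intervalIntegrable_rpow' (a := 0) (b := 1) hp)
      rwa [intervalIntegrable_iff_integrableOn_Ioc_of_le (by norm_num)] at this
    apply Integrable.mono' hbase (hmeas.mono_set (by intro x hx; exact hx.1))
    · filter_upwards [ae_restrict_mem measurableSet_Ioc] with x hx
      have h1 : (0:ℝ) < x := hx.1
      rw [Real.norm_eq_abs, abs_mul, _root_.abs_of_nonneg (Real.rpow_nonneg h1.le p),
        _root_.abs_of_nonneg (by positivity)]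
      have : ((1 + x) ^ n)⁻¹ ≤ 1 := by
        rw [inv_le_one_iff₀]; right; exact one_le_pow₀ (by linarith)
      nlinarith [Real.rpow_nonneg h1.le p]
  · have hbase : IntegrableOn (fun x : ℝ => x ^ (p - n)) (Ioi (1:ℝ)) :=
      integrableOn_Ioi_rpow_of_lt (by linarith) one_pos
    apply Integrable.mono' hbase (hmeas.mono_set (by intro x hx; exact lt_trans one_pos (mem_Ioi.mp hx)))
    · filter_upwards [ae_restrict_mem measurableSet_Ioi] with x hx
      have h1 : (1:ℝ) < x := hx
      have h0 : (0:ℝ) < x := lt_trans one_pos h1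
      rw [Real.norm_eq_abs, abs_mul, _root_.abs_of_nonneg (Real.rpow_nonneg h0.le p),
        _root_.abs_of_nonneg (by positivity)]
      have hxn : ((1 + x) ^ n)⁻¹ ≤ (x ^ n)⁻¹ := by
        apply inv_anti₀ (by positivity)
        exact pow_le_pow_left₀ (by linarith) (by linarith) n
      have hxpow : (x ^ n)⁻¹ = x ^ (-(n:ℝ)) := by
        rw [← Real.rpow_natCast x n, ← Real.rpow_neg h0.le]
      calc x ^ p * ((1 + x) ^ n)⁻¹ ≤ x ^ p * (x ^ n)⁻¹ := by
            exact mul_le_mul_of_nonneg_left hxn (Real.rpow_nonneg h0.le p)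
        _ = x ^ (p - n) := by rw [hxpow, ← Real.rpow_add h0, sub_eq_add_neg]


lemma aux_bound {a : ℂ} {M : ℝ} (hM : 1 ≤ M) (haM : ‖a‖ ≤ M)
    (ha : 1/4 < a.re ∨ a.im < -(1/4)) {x : ℝ} (hx : 0 ≤ x) :
    1 + x ≤ 12 * M * ‖1 + a * x‖ := by
  set A := ‖1 + a * x‖ with hA
  have hA0 : 0 ≤ A := norm_nonneg _
  have hre : (1 + a * x).re = 1 + a.re * x := by simp
  have him : (1 + a * x).im = a.im * x := by simp
  rcases ha with h | h
  · have hsq : ((1 + x)/4)^2 ≤ A^2 := by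
      rw [hA, Complex.sq_norm, Complex.normSq_apply, hre, him]
      nlinarith [sq_nonneg (a.im * x), sq_nonneg (a.re * x - x/4), mul_nonneg hx hx,
        mul_nonneg (le_of_lt (lt_trans (by norm_num : (0:ℝ) < 1/4) h)) hx]
    have h14 : (1 + x)/4 ≤ A := by
      have := Real.sqrt_le_sqrt hsq
      rwa [Real.sqrt_sq (by positivity), Real.sqrt_sq hA0] at this
    nlinarith
  · have hA1 : x * (1/4) ≤ A := by
      have h1 : |(1 + a * x).im| ≤ A := Complex.abs_im_le_norm _
      rw [him, abs_mul, _root_.abs_of_nonneg hx] at h1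
      have : 1/4 ≤ |a.im| := by rw [abs_of_neg (by linarith)]; linarith
      nlinarith [abs_nonneg a.im]
    have hA2 : 1 - M * x ≤ A := by
      have h1 : 1 - ‖a * x‖ ≤ A := by
        have := norm_sub_norm_le (1 : ℂ) (-(a * x))
        simpa using this
      have h2 : ‖a * x‖ ≤ M * x := by
        rw [norm_mul, Complex.norm_of_nonneg hx]
        exact mul_le_mul_of_nonneg_right haM hx
      linarith
    rcases le_or_gt x (1/(2*M)) with hx2 | hx2
    · have hMx : M * x ≤ 1/2 := by
        calc M * x ≤ M * (1/(2*M)) := mul_le_mul_of_nonneg_left hx2 (by linarith)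
          _ = 1/2 := by field_simp
      have hxh : x ≤ 1/2 := by
        calc x ≤ 1/(2*M) := hx2
          _ ≤ 1/2 := by rw [div_le_div_iff₀ (by linarith) (by norm_num)]; linarith
      nlinarith
    · have h2Mx : 1 ≤ 2 * M * x := by
        rw [div_lt_iff₀ (by linarith)] at hx2
        linarith
      nlinarith


lemma cexp_norm (s c : ℂ) {w : ℝ} (hw : 0 < w) :
    ‖(w:ℂ) ^ s * Complex.exp (-(c * w))‖ = w ^ s.re * Real.exp (-(c.re * w)) := by
  rw [norm_mul, Complex.norm_cpow_eq_rpow_re_of_pos hw, Complex.norm_exp]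
  congr 2
  simp [Complex.neg_re, Complex.mul_re]

lemma cexp_meas (s c : ℂ) :
    AEStronglyMeasurable (fun w : ℝ => (w:ℂ) ^ s * Complex.exp (-(c * w)))
      (volume.restrict (Ioi (0:ℝ))) := by
  apply ContinuousOn.aestronglyMeasurable _ measurableSet_Ioi
  intro w hw
  apply ContinuousWithinAt.mul
  · exact (Complex.continuousAt_ofReal_cpow_const w s (Or.inr (ne_of_gt hw))).continuousWithinAt
  · apply Continuous.continuousWithinAt
    fun_prop

lemma int_cexp (s : ℂ) (hs : 0 < s.re) {c : ℂ} (hc : 1 ≤ c.re) :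
    IntegrableOn (fun w : ℝ => (w:ℂ) ^ (s-1) * Complex.exp (-(c * w))) (Ioi (0:ℝ)) := by
  apply Integrable.mono' (Real.GammaIntegral_convergent hs) (cexp_meas _ _)
  filter_upwards [ae_restrict_mem measurableSet_Ioi] with w hw
  rw [cexp_norm _ _ hw]
  have h1 : Real.exp (-(c.re * w)) ≤ Real.exp (-w) := by
    apply Real.exp_le_exp.2
    nlinarith [le_of_lt (show (0:ℝ) < w from hw)]
  have h2 : (0:ℝ) ≤ w ^ (s.re - 1) := Real.rpow_nonneg (le_of_lt hw) _
  calc w ^ (s-1:ℂ).re * Real.exp (-(c.re * w)) = w ^ (s.re - 1) * Real.exp (-(c.re * w)) := by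
        norm_num
    _ ≤ w ^ (s.re-1) * Real.exp (-w) := by nlinarith [Real.exp_pos (-(c.re*w))]
    _ = Real.exp (-w) * w ^ (s.re - 1) := by ring


noncomputable def Faux (u : ℂ) (k : ℕ) (r : ℝ) : ℝ → ℝ → ℂ := fun x w =>
  (x:ℂ)^(u-1) * ((w:ℂ)^((k:ℂ)-1) * Complex.exp (-((1 + (r:ℂ)*x) * w)))





set_option maxHeartbeats 1000000 in
lemma aux_real (u : ℂ) (k : ℕ) (hu : 0 < u.re) (huk : u.re < (k:ℝ)) {r : ℝ} (hr : 1/2 < r) :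
    ∫ x in Ioi (0:ℝ), (x:ℂ) ^ (u - 1) / (1 + (r:ℂ) * x) ^ k =
      (1/(r:ℂ)) ^ u * (Complex.Gamma u * Complex.Gamma ((k:ℂ) - u)) / Complex.Gamma (k:ℂ) := by
  have hr0 : (0:ℝ) < r := by linarith
  have hk0 : (0:ℝ) < k := lt_trans hu huk
  have hkre : 0 < ((k:ℂ)).re := by simpa using hk0
  have hΓk : Complex.Gamma (k:ℂ) ≠ 0 := Complex.Gamma_ne_zero_of_re_pos hkre
  have hF : ∀ x w : ℝ, Faux u k r x w =
      (x:ℂ)^(u-1) * ((w:ℂ)^((k:ℂ)-1) * Complex.exp (-((1 + (r:ℂ)*x) * w))) := fun _ _ => rfl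
  -- Step 1: pointwise representation
  have hrep : ∀ x : ℝ, 0 < x → ∫ w in Ioi (0:ℝ), Faux u k r x w =
      (x:ℂ)^(u-1) * (((1 + (r:ℂ)*x))^k)⁻¹ * Complex.Gamma (k:ℂ) := by
    intro x hx
    have hc : 0 < 1 + r*x := by nlinarith
    have hcast : ((1 + r*x : ℝ) : ℂ) = 1 + (r:ℂ)*x := by push_cast; ring
    have key := integral_cpow_mul_exp_neg_mul_Ioi (a := (k:ℂ)) (r := 1 + r*x) hkre hc
    rw [hcast] at key
    have h2 : ((1:ℂ)/(1 + (r:ℂ)*x))^((k:ℕ):ℂ) = ((1 + (r:ℂ)*x)^k)⁻¹ := by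
      rw [Complex.cpow_natCast, one_div, inv_pow]
    simp only [hF]
    rw [MeasureTheory.integral_const_mul, key, h2]
    ring
  -- Step 2: integrability on the product
  have hmeas : AEStronglyMeasurable (Function.uncurry (Faux u k r))
      ((volume.restrict (Ioi (0:ℝ))).prod (volume.restrict (Ioi (0:ℝ)))) := by
    rw [Measure.prod_restrict]
    apply ContinuousOn.aestronglyMeasurable _ (measurableSet_Ioi.prod measurableSet_Ioi)
    intro p hp
    obtain ⟨hp1, hp2⟩ := hp
    apply ContinuousWithinAt.mul
    · exact ((Complex.continuousAt_ofReal_cpow_const p.1 (u-1)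
        (Or.inr (ne_of_gt hp1))).comp continuous_fst.continuousAt).continuousWithinAt
    · apply ContinuousWithinAt.mul
      · exact ((Complex.continuousAt_ofReal_cpow_const p.2 ((k:ℂ)-1)
          (Or.inr (ne_of_gt hp2))).comp continuous_snd.continuousAt).continuousWithinAt
      · apply Continuous.continuousWithinAt
        fun_prop
  have hFint : Integrable (Function.uncurry (Faux u k r))
      ((volume.restrict (Ioi (0:ℝ))).prod (volume.restrict (Ioi (0:ℝ)))) := by
    rw [MeasureTheory.integrable_prod_iff hmeas]
    constructor
    · filter_upwards [ae_restrict_mem measurableSet_Ioi] with x hx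
      have hx0 : (0:ℝ) < x := hx
      have hcre : 1 ≤ (1 + (r:ℂ)*(x:ℝ)).re := by
        simp only [Complex.add_re, Complex.one_re, Complex.mul_re, Complex.ofReal_re,
          Complex.ofReal_im]
        nlinarith
      have base := (int_cexp (k:ℂ) hkre hcre).const_mul ((x:ℂ)^(u-1))
      apply base.congr
      filter_upwards with w
      exact (hF x w).symm
    · have heq : ∀ x ∈ Ioi (0:ℝ), (∫ w in Ioi (0:ℝ), ‖Function.uncurry (Faux u k r) (x, w)‖) =
          Real.Gamma k * (x ^ (u.re - 1) * ((1 + r*x) ^ k)⁻¹) := by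
        intro x hx
        have hx0 : (0:ℝ) < x := hx
        have hc : 0 < 1 + r*x := by nlinarith
        have hnorm : ∀ w ∈ Ioi (0:ℝ), ‖Function.uncurry (Faux u k r) (x, w)‖ =
            x ^ (u.re - 1) * (w ^ ((k:ℝ)-1) * Real.exp (-((1 + r*x) * w))) := by
          intro w hw
          have hw0 : (0:ℝ) < w := hw
          rw [Function.uncurry_apply_pair, hF]
          rw [norm_mul, cexp_norm _ _ hw0,
            Complex.norm_cpow_eq_rpow_re_of_pos hx0]
          have hre1 : (u-1).re = u.re - 1 := by simp
          have hre2 : ((k:ℂ)-1).re = (k:ℝ)-1 := by simp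
          have hre3 : (1 + (r:ℂ)*(x:ℝ)).re = 1 + r*x := by
            simp [Complex.add_re, Complex.mul_re]
          rw [hre1, hre2, hre3]
        rw [setIntegral_congr_fun measurableSet_Ioi hnorm, MeasureTheory.integral_const_mul,
          Real.integral_rpow_mul_exp_neg_mul_Ioi hk0 hc]
        have h3 : ((1:ℝ)/(1 + r*x)) ^ ((k:ℝ)) = ((1 + r*x) ^ k)⁻¹ := by
          rw [Real.rpow_natCast, one_div, inv_pow]
        rw [h3]; ring
      have hGint : IntegrableOn
          (fun x : ℝ => Real.Gamma k * (x ^ (u.re - 1) * ((1 + r*x) ^ k)⁻¹)) (Ioi (0:ℝ)) := by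
        apply Integrable.const_mul
        apply Integrable.mono'
          (((aux_integrableOn (u.re-1) k (by linarith) (by linarith)).const_mul ((2:ℝ)^k)))
        · apply ContinuousOn.aestronglyMeasurable _ measurableSet_Ioi
          intro x hx
          apply ContinuousWithinAt.mul
          · exact (Real.continuousAt_rpow_const x _ (Or.inl (ne_of_gt hx))).continuousWithinAt
          · apply ContinuousWithinAt.inv₀
            · exact ((continuous_const.add (continuous_const.mul continuous_id)).pow
                k).continuousWithinAt
            · have : (0:ℝ) < x := hx
              positivity
        · filter_upwards [ae_restrict_mem measurableSet_Ioi] with x hx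
          have hx0 : (0:ℝ) < x := hx
          have hc : 0 < 1 + r*x := by nlinarith
          have hb : (1 + x)^k ≤ 2^k * (1 + r*x)^k := by
            rw [← mul_pow]
            apply pow_le_pow_left₀ (by linarith) (by nlinarith) k
          have h4 : (0:ℝ) < (1 + r*x)^k := by positivity
          have h5 : (0:ℝ) < (1 + x)^k := by positivity
          have hinv : ((1 + r*x)^k)⁻¹ ≤ 2^k * ((1 + x)^k)⁻¹ := by
            have hd : (1:ℝ)/(1 + r*x)^k ≤ 2^k/(1 + x)^k := by
              rw [div_le_div_iff₀ h4 h5]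
              nlinarith
            calc ((1 + r*x)^k)⁻¹ = 1/(1 + r*x)^k := by rw [one_div]
              _ ≤ 2^k/(1 + x)^k := hd
              _ = 2^k * ((1 + x)^k)⁻¹ := by rw [div_eq_mul_inv]
          have hxp : (0:ℝ) ≤ x ^ (u.re-1) := Real.rpow_nonneg hx0.le _
          rw [Real.norm_eq_abs, _root_.abs_of_nonneg (by positivity)]
          calc x ^ (u.re-1) * ((1 + r*x)^k)⁻¹ ≤ x ^ (u.re-1) * (2^k * ((1 + x)^k)⁻¹) :=
                mul_le_mul_of_nonneg_left hinv hxp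
            _ = 2^k * (x ^ (u.re-1) * ((1 + x)^k)⁻¹) := by ring
      exact hGint.congr ((ae_restrict_mem measurableSet_Ioi).mono fun x hx => (heq x hx).symm)
  -- Step 3: swap
  have hswap := MeasureTheory.integral_integral_swap hFint
  -- Step 4: inner integral after swap
  have hinner : ∀ w : ℝ, 0 < w → (∫ x in Ioi (0:ℝ), Faux u k r x w) =
      Complex.Gamma u * ((1/(r:ℂ))^u * ((w:ℂ)^((k:ℂ) - u - 1) * Complex.exp (-(w:ℂ)))) := by
    intro w hw
    have hrw : 0 < r * w := mul_pos hr0 hw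
    have key := integral_cpow_mul_exp_neg_mul_Ioi (a := u) (r := r*w) hu hrw
    have hsplit : ∀ x : ℝ, Faux u k r x w = ((w:ℂ)^((k:ℂ)-1) * Complex.exp (-(w:ℂ))) *
        ((x:ℂ)^(u-1) * Complex.exp (-(((r*w : ℝ):ℂ) * x))) := by
      intro x
      rw [hF]
      have e : -((1 + (r:ℂ)*x) * w) = -(w:ℂ) + -(((r*w : ℝ):ℂ) * x) := by push_cast; ring
      rw [e, Complex.exp_add]
      ring
    calc (∫ x in Ioi (0:ℝ), Faux u k r x w)
        = ∫ x in Ioi (0:ℝ), ((w:ℂ)^((k:ℂ)-1) * Complex.exp (-(w:ℂ))) *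
            ((x:ℂ)^(u-1) * Complex.exp (-(((r*w : ℝ):ℂ) * x))) := by simp only [hsplit]
      _ = ((w:ℂ)^((k:ℂ)-1) * Complex.exp (-(w:ℂ))) * ((1/((r*w : ℝ):ℂ))^u * Complex.Gamma u) := by
          rw [MeasureTheory.integral_const_mul, key]
      _ = Complex.Gamma u * ((1/(r:ℂ))^u * ((w:ℂ)^((k:ℂ) - u - 1) * Complex.exp (-(w:ℂ)))) := by
          have h1 : ((1:ℂ)/((r*w : ℝ):ℂ))^u = (1/(r:ℂ))^u * ((w:ℂ))^(-u) := by
            have e1 : ((1:ℝ)/(r*w)) = (1/r) * (1/w) := by field_simp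
            have e2 : ((1:ℂ)/((r*w : ℝ):ℂ)) = (((1/(r*w) : ℝ)):ℂ) := by push_cast; ring
            rw [e2, e1, Complex.ofReal_mul,
              mul_cpow_ofReal_nonneg (by positivity) (by positivity)]
            congr 1
            · norm_num
            · have e3 : (((1/w : ℝ)):ℂ) = ((w:ℂ))⁻¹ := by push_cast; ring
              rw [e3, Complex.inv_cpow _ _ (by
                rw [Complex.arg_ofReal_of_nonneg hw.le]
                exact Real.pi_ne_zero.symm), ← Complex.cpow_neg]
          have h2 : (w:ℂ)^((k:ℂ)-1) * ((w:ℂ))^(-u) = (w:ℂ)^((k:ℂ) - u - 1) := by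
            rw [← Complex.cpow_add _ _ (Complex.ofReal_ne_zero.2 hw.ne')]
            congr 1; ring
          rw [h1, ← h2]
          ring
  -- Step 5: outer integral
  have houter : (∫ w in Ioi (0:ℝ), ((w:ℂ)^((k:ℂ) - u - 1) * Complex.exp (-(w:ℂ)))) =
      Complex.Gamma ((k:ℂ) - u) := by
    rw [Complex.Gamma_eq_integral (by simp [Complex.sub_re]; linarith : 0 < ((k:ℂ)-u).re)]
    rw [Complex.GammaIntegral]
    apply setIntegral_congr_fun measurableSet_Ioi
    intro w hw
    simp only [Complex.ofReal_exp, Complex.ofReal_neg]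
    ring
  -- Assemble
  calc ∫ x in Ioi (0:ℝ), (x:ℂ) ^ (u - 1) / (1 + (r:ℂ) * x) ^ k
      = ∫ x in Ioi (0:ℝ), (Complex.Gamma (k:ℂ))⁻¹ * ∫ w in Ioi (0:ℝ), Faux u k r x w := by
        apply setIntegral_congr_fun measurableSet_Ioi
        intro x hx
        dsimp only
        rw [hrep x hx]
        field_simp
    _ = (Complex.Gamma (k:ℂ))⁻¹ * ∫ x in Ioi (0:ℝ), ∫ w in Ioi (0:ℝ), Faux u k r x w := by
        rw [MeasureTheory.integral_const_mul]
    _ = (Complex.Gamma (k:ℂ))⁻¹ * ∫ w in Ioi (0:ℝ), ∫ x in Ioi (0:ℝ), Faux u k r x w := by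
        rw [hswap]
    _ = (Complex.Gamma (k:ℂ))⁻¹ * ∫ w in Ioi (0:ℝ),
          Complex.Gamma u * ((1/(r:ℂ))^u * ((w:ℂ)^((k:ℂ) - u - 1) * Complex.exp (-(w:ℂ)))) := by
        congr 1
        exact setIntegral_congr_fun measurableSet_Ioi (fun w hw => hinner w hw)
    _ = (Complex.Gamma (k:ℂ))⁻¹ *
          (Complex.Gamma u * ((1/(r:ℂ))^u * Complex.Gamma ((k:ℂ) - u))) := by
        rw [MeasureTheory.integral_const_mul, MeasureTheory.integral_const_mul, houter]
    _ = (1/(r:ℂ)) ^ u * (Complex.Gamma u * Complex.Gamma ((k:ℂ) - u)) / Complex.Gamma (k:ℂ) := by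
        field_simp




-- nonvanishing of 1 + a x
lemma aux_ne {a : ℂ} {M : ℝ} (hM : 1 ≤ M) (haM : ‖a‖ ≤ M)
    (ha : 1/4 < a.re ∨ a.im < -(1/4)) {x : ℝ} (hx : 0 ≤ x) : (1 : ℂ) + a * x ≠ 0 := by
  intro h0
  have := aux_bound hM haM ha hx
  rw [h0] at this
  simp at this
  linarith

-- strong measurability of the integrand and its derivative
lemma aux_meas (u : ℂ) (k : ℕ) {a : ℂ} (hne : ∀ x : ℝ, 0 < x → (1 : ℂ) + a * x ≠ 0) :
    AEStronglyMeasurable (fun x : ℝ => (x:ℂ)^(u-1) / (1 + a*x)^k)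
      (volume.restrict (Ioi (0:ℝ))) := by
  apply ContinuousOn.aestronglyMeasurable _ measurableSet_Ioi
  intro x hx
  apply ContinuousWithinAt.div
  · exact (Complex.continuousAt_ofReal_cpow_const x (u-1)
      (Or.inr (ne_of_gt hx))).continuousWithinAt
  · exact (Continuous.continuousWithinAt (by fun_prop))
  · exact pow_ne_zero k (hne x hx)

lemma aux_meas' (u : ℂ) (k : ℕ) {a : ℂ} (hne : ∀ x : ℝ, 0 < x → (1 : ℂ) + a * x ≠ 0) :
    AEStronglyMeasurable
      (fun x : ℝ => (x:ℂ)^(u-1) * (-(((k:ℕ):ℂ) * (1 + a*x)^(k-1) * x) / ((1 + a*x)^k)^2))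
      (volume.restrict (Ioi (0:ℝ))) := by
  apply ContinuousOn.aestronglyMeasurable _ measurableSet_Ioi
  intro x hx
  apply ContinuousWithinAt.mul
  · exact (Complex.continuousAt_ofReal_cpow_const x (u-1)
      (Or.inr (ne_of_gt hx))).continuousWithinAt
  · apply ContinuousWithinAt.div
    · exact (Continuous.continuousWithinAt (by fun_prop))
    · exact (Continuous.continuousWithinAt (by fun_prop))
    · exact pow_ne_zero 2 (pow_ne_zero k (hne x hx))

set_option maxHeartbeats 1000000 in
lemma aux_hasDeriv (u : ℂ) (k : ℕ) (hu : 0 < u.re) (huk : u.re < (k:ℝ)) {a₀ : ℂ}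
    (ha : 1/4 < a₀.re ∨ a₀.im < -(1/4)) :
    DifferentiableAt ℂ (fun a : ℂ => ∫ x in Ioi (0:ℝ), (x:ℂ)^(u-1) / (1 + a*x)^k) a₀ := by
  have hk1 : 1 ≤ k := by
    by_contra hc
    push_neg at hc
    interval_cases k
    · simp at huk; linarith
  have hP_open : IsOpen {z : ℂ | 1/4 < z.re ∨ z.im < -(1/4)} := by
    have : {z : ℂ | 1/4 < z.re ∨ z.im < -(1/4)} =
        {z : ℂ | 1/4 < z.re} ∪ {z : ℂ | z.im < -(1/4)} := rfl
    rw [this]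
    exact (isOpen_lt continuous_const Complex.continuous_re).union
      (isOpen_lt Complex.continuous_im continuous_const)
  obtain ⟨ε₀, hε₀, hball⟩ := Metric.isOpen_iff.1 hP_open a₀ ha
  set ε : ℝ := min ε₀ 1 with hε
  have hεpos : 0 < ε := lt_min hε₀ one_pos
  set M : ℝ := ‖a₀‖ + 1 with hM
  have hM1 : 1 ≤ M := le_add_of_nonneg_left (norm_nonneg _)
  have hmem : ∀ b ∈ Metric.ball a₀ ε, (1/4 < b.re ∨ b.im < -(1/4)) ∧ ‖b‖ ≤ M := by
    intro b hb
    constructor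
    · exact hball (Metric.ball_subset_ball (min_le_left _ _) hb)
    · have h1 : ‖b - a₀‖ < 1 := lt_of_lt_of_le (mem_ball_iff_norm.1 hb) (min_le_right _ _)
      calc ‖b‖ = ‖a₀ + (b - a₀)‖ := by ring_nf
        _ ≤ ‖a₀‖ + ‖b - a₀‖ := norm_add_le _ _
        _ ≤ M := by rw [hM]; linarith
  have hne : ∀ b ∈ Metric.ball a₀ ε, ∀ x : ℝ, 0 < x → (1 : ℂ) + b * x ≠ 0 := by
    intro b hb x hx
    exact aux_ne hM1 (hmem b hb).2 (hmem b hb).1 hx.le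
  have hlow : ∀ b ∈ Metric.ball a₀ ε, ∀ x : ℝ, 0 ≤ x →
      1 + x ≤ 12 * M * ‖1 + b * x‖ := by
    intro b hb x hx
    exact aux_bound hM1 (hmem b hb).2 (hmem b hb).1 hx
  have ha₀ball : a₀ ∈ Metric.ball a₀ ε := Metric.mem_ball_self hεpos
  -- the dominated-derivative theorem
  have key := hasDerivAt_integral_of_dominated_loc_of_deriv_le (μ := volume.restrict (Ioi (0:ℝ)))
    (F := fun (a : ℂ) (x : ℝ) => (x:ℂ)^(u-1) / (1 + a*x)^k)
    (F' := fun (a : ℂ) (x : ℝ) =>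
      (x:ℂ)^(u-1) * (-(((k:ℕ):ℂ) * (1 + a*x)^(k-1) * x) / ((1 + a*x)^k)^2))
    (x₀ := a₀)
    (bound := fun x : ℝ => ((k:ℝ) * (12*M)^(k+1)) * (x ^ u.re * ((1+x)^(k+1))⁻¹))
    (Metric.ball_mem_nhds a₀ hεpos) ?meas ?int ?meas' ?bnd ?bint ?deriv
  · exact key.2.differentiableAt
  case meas =>
    filter_upwards [Metric.ball_mem_nhds a₀ hεpos] with b hb
    exact aux_meas u k (hne b hb)
  case int =>
    -- Integrable (F a₀)
    apply Integrable.mono'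
      ((aux_integrableOn (u.re-1) k (by linarith) (by linarith)).const_mul ((12*M)^k))
    · exact aux_meas u k (hne a₀ ha₀ball)
    · filter_upwards [ae_restrict_mem measurableSet_Ioi] with x hx
      have hx0 : (0:ℝ) < x := hx
      have hA : (1+x)/(12*M) ≤ ‖1 + a₀*x‖ := by
        have := hlow a₀ ha₀ball x hx0.le
        rw [div_le_iff₀ (by positivity)]
        linarith [this]
      have hA0 : 0 < ‖1 + a₀*x‖ := by
        have : (0:ℝ) < (1+x)/(12*M) := by positivity
        linarith
      rw [norm_div, Complex.norm_cpow_eq_rpow_re_of_pos hx0, norm_pow]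
      have hre1 : (u-1).re = u.re - 1 := by simp
      rw [hre1]
      have h6 : ((1+x)/(12*M))^k ≤ (‖1 + a₀*x‖)^k :=
        pow_le_pow_left₀ (by positivity) hA k
      have h7 : (‖1 + a₀*x‖ ^ k)⁻¹ ≤ (12*M)^k * ((1+x)^k)⁻¹ := by
        have hd : (1:ℝ)/(‖1 + a₀*x‖)^k ≤ (12*M)^k/(1+x)^k := by
          rw [div_le_div_iff₀ (by positivity) (by positivity)]
          calc 1 * (1+x)^k = ((1+x)/(12*M))^k * (12*M)^k := by
                rw [div_pow]; field_simp
            _ ≤ (‖1 + a₀*x‖)^k * (12*M)^k := by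
                apply mul_le_mul_of_nonneg_right h6 (by positivity)
            _ = (12*M)^k * (‖1 + a₀*x‖)^k := by ring
        calc (‖1 + a₀*x‖ ^ k)⁻¹ = 1/(‖1 + a₀*x‖)^k := by rw [one_div]
          _ ≤ (12*M)^k/(1+x)^k := hd
          _ = (12*M)^k * ((1+x)^k)⁻¹ := by rw [div_eq_mul_inv]
      calc x ^ (u.re-1) / ‖1 + a₀*x‖ ^ k
          = x ^ (u.re-1) * (‖1 + a₀*x‖ ^ k)⁻¹ := by rw [div_eq_mul_inv]
        _ ≤ x ^ (u.re-1) * ((12*M)^k * ((1+x)^k)⁻¹) :=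
            mul_le_mul_of_nonneg_left h7 (Real.rpow_nonneg hx0.le _)
        _ = (12*M)^k * (x ^ (u.re-1) * ((1+x)^k)⁻¹) := by ring
  case meas' =>
    exact aux_meas' u k (hne a₀ ha₀ball)
  case bnd =>
    filter_upwards [ae_restrict_mem measurableSet_Ioi] with x hx
    intro b hb
    have hx0 : (0:ℝ) < x := hx
    set A : ℝ := ‖1 + b*x‖ with hAdef
    have hA : (1+x)/(12*M) ≤ A := by
      have := hlow b hb x hx0.le
      rw [div_le_iff₀ (by positivity)]
      linarith [this]
    have hA0 : 0 < A := by
      have : (0:ℝ) < (1+x)/(12*M) := by positivity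
      linarith
    rw [norm_mul, norm_div, Complex.norm_cpow_eq_rpow_re_of_pos hx0]
    have hre1 : (u-1).re = u.re - 1 := by simp
    rw [hre1]
    have hnum : ‖-(((k:ℕ):ℂ) * (1 + b*x)^(k-1) * (x:ℂ))‖ = k * A^(k-1) * x := by
      rw [norm_neg, norm_mul, norm_mul, norm_pow, Complex.norm_natCast,
        Complex.norm_of_nonneg hx0.le]
    have hden : ‖((1 + b*x)^k)^2‖ = (A^k)^2 := by
      rw [norm_pow, norm_pow]
    rw [hnum, hden]
    -- A^(k-1) * x / (A^k)^2 = x / A^(k+1) and then bound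
    have e2 : (A^k)^2 = A^(k-1) * A^(k+1) := by
      rw [← pow_mul, ← pow_add]
      congr 1
      omega
    have h7 : (A^(k+1))⁻¹ ≤ (12*M)^(k+1) * ((1+x)^(k+1))⁻¹ := by
      have h6 : ((1+x)/(12*M))^(k+1) ≤ A^(k+1) := pow_le_pow_left₀ (by positivity) hA _
      have hd : (1:ℝ)/A^(k+1) ≤ (12*M)^(k+1)/(1+x)^(k+1) := by
        rw [div_le_div_iff₀ (by positivity) (by positivity)]
        calc 1 * (1+x)^(k+1) = ((1+x)/(12*M))^(k+1) * (12*M)^(k+1) := by rw [div_pow]; field_simp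
          _ ≤ A^(k+1) * (12*M)^(k+1) := mul_le_mul_of_nonneg_right h6 (by positivity)
          _ = (12*M)^(k+1) * A^(k+1) := by ring
      calc (A^(k+1))⁻¹ = 1/A^(k+1) := by rw [one_div]
        _ ≤ (12*M)^(k+1)/(1+x)^(k+1) := hd
        _ = (12*M)^(k+1) * ((1+x)^(k+1))⁻¹ := by rw [div_eq_mul_inv]
    have e3 : (k:ℝ) * A^(k-1) * x / (A^k)^2 = (k:ℝ) * x * (A^(k+1))⁻¹ := by
      rw [e2]
      field_simp
    have hxr : x ^ u.re = x ^ (u.re-1) * x := by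
      have := Real.rpow_add_one hx0.ne' (u.re-1)
      simpa using this
    rw [e3]
    calc x^(u.re-1) * ((k:ℝ) * x * (A^(k+1))⁻¹)
        ≤ x^(u.re-1) * ((k:ℝ) * x * ((12*M)^(k+1) * ((1+x)^(k+1))⁻¹)) := by
          apply mul_le_mul_of_nonneg_left _ (Real.rpow_nonneg hx0.le _)
          apply mul_le_mul_of_nonneg_left h7 (by positivity)
      _ = ((k:ℝ) * (12*M)^(k+1)) * (x^u.re * ((1+x)^(k+1))⁻¹) := by rw [hxr]; ring
  case bint =>
    exact (aux_integrableOn u.re (k+1) (by linarith) (by push_cast; linarith)).const_mul _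
  case deriv =>
    filter_upwards [ae_restrict_mem measurableSet_Ioi] with x hx
    intro b hb
    have hx0 : (0:ℝ) < x := hx
    have hnz : ((1:ℂ) + b*x)^k ≠ 0 := pow_ne_zero k (hne b hb x hx0)
    have hc : HasDerivAt (fun a : ℂ => (1:ℂ) + a * x) ((x:ℝ):ℂ) b := by
      simpa using ((hasDerivAt_id b).mul_const ((x:ℝ):ℂ)).const_add 1
    have hpow : HasDerivAt (fun a : ℂ => ((1:ℂ) + a * x)^k)
        (((k:ℕ):ℂ) * (1 + b*x)^(k-1) * x) b := hc.pow k
    have hinv : HasDerivAt (fun a : ℂ => (((1:ℂ) + a * x)^k)⁻¹)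
        (-(((k:ℕ):ℂ) * (1 + b*x)^(k-1) * x) / (((1 + b*x)^k)^2)) b := hpow.inv hnz
    have := hinv.const_mul ((x:ℂ)^(u-1))
    simp only [div_eq_mul_inv]
    convert this using 2
    · rfl
    · ring




set_option maxHeartbeats 1000000 in
lemma aux_glob (u : ℂ) (k : ℕ) (hu : 0 < u.re) (huk : u.re < (k:ℝ)) {a : ℂ}
    (ha : 1/4 < a.re ∨ a.im < -(1/4)) :
    ∫ x in Ioi (0:ℝ), (x:ℂ)^(u-1) / (1 + a*x)^k =
      (Complex.Gamma u * Complex.Gamma ((k:ℂ)-u) / Complex.Gamma (k:ℂ)) * a^(-u) := by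
  set H : ℂ → ℂ := fun a => ∫ x in Ioi (0:ℝ), (x:ℂ)^(u-1) / (1 + a*x)^k with hH
  set G : ℂ → ℂ := fun a =>
    (Complex.Gamma u * Complex.Gamma ((k:ℂ)-u) / Complex.Gamma (k:ℂ)) * a^(-u) with hG
  set P : Set ℂ := {z : ℂ | 1/4 < z.re} ∪ {z : ℂ | z.im < -(1/4)} with hP
  have haP : a ∈ P := ha
  have hP_open : IsOpen P :=
    (isOpen_lt continuous_const Complex.continuous_re).union
      (isOpen_lt Complex.continuous_im continuous_const)
  have hP_conn : IsPreconnected P := by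
    apply IsPreconnected.union (1 - Complex.I)
    · show (1:ℝ)/4 < (1 - Complex.I).re
      simp; norm_num
    · show (1 - Complex.I).im < -(1/4)
      simp; norm_num
    · exact (convex_halfSpace_re_gt (1/4)).isPreconnected
    · exact (convex_halfSpace_im_lt (-(1/4))).isPreconnected
  have hslit : ∀ z ∈ P, z ∈ Complex.slitPlane := by
    intro z hz
    rcases hz with hz | hz
    · exact Or.inl (by simp at hz ⊢; linarith)
    · exact Or.inr (by simp at hz ⊢; intro h0; rw [h0] at hz; linarith)
  have hHa : AnalyticOnNhd ℂ H P := by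
    apply DifferentiableOn.analyticOnNhd _ hP_open
    intro z hz
    exact (aux_hasDeriv u k hu huk hz).differentiableWithinAt
  have hGa : AnalyticOnNhd ℂ G P := by
    apply DifferentiableOn.analyticOnNhd _ hP_open
    intro z hz
    apply DifferentiableAt.differentiableWithinAt
    exact (differentiableAt_id.cpow (differentiableAt_const _) (hslit z hz)).const_mul _
  have h1P : (1:ℂ) ∈ P := Or.inl (by norm_num)
  have hfreq : ∃ᶠ z in nhdsWithin (1:ℂ) {(1:ℂ)}ᶜ, H z = G z := by
    have hseq : ∀ n : ℕ, H ((1 + 1/(n+1) : ℝ) : ℂ) = G ((1 + 1/(n+1) : ℝ) : ℂ) := by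
      intro n
      have hr : 1/2 < (1 + 1/(n+1) : ℝ) := by
        have : (0:ℝ) < 1/(n+1) := by positivity
        linarith
      have hr0 : (0:ℝ) < 1 + 1/(n+1) := by positivity
      have := aux_real u k hu huk hr
      rw [hH, hG]
      simp only
      rw [this]
      have harg : ((1 + 1/(n+1) : ℝ) : ℂ).arg ≠ Real.pi := by
        rw [Complex.arg_ofReal_of_nonneg hr0.le]
        exact Real.pi_ne_zero.symm
      have h2 : ((1:ℂ)/((1 + 1/(n+1) : ℝ) : ℂ))^u = ((1 + 1/(n+1) : ℝ) : ℂ)^(-u) := by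
        rw [one_div, Complex.inv_cpow _ _ harg, ← Complex.cpow_neg]
      rw [h2]
      ring
    have htend : Tendsto (fun n : ℕ => ((1 + 1/(n+1) : ℝ) : ℂ)) atTop
        (nhdsWithin (1:ℂ) {(1:ℂ)}ᶜ) := by
      rw [tendsto_nhdsWithin_iff]
      constructor
      · have : Tendsto (fun n : ℕ => (1 + 1/(n+1) : ℝ)) atTop (nhds 1) := by
          have h0 : Tendsto (fun n : ℕ => (1/(n+1) : ℝ)) atTop (nhds 0) :=
            tendsto_one_div_add_atTop_nhds_zero_nat
          simpa using (tendsto_const_nhds.add h0)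
        have := (Complex.continuous_ofReal.tendsto 1).comp this
        simpa [Function.comp_def] using this
      · filter_upwards with n
        simp only [mem_compl_iff, mem_singleton_iff]
        intro hc
        have : (1 + 1/(n+1) : ℝ) = 1 := by exact_mod_cast hc
        have : (1/(n+1) : ℝ) = 0 := by linarith
        have hpos : (0:ℝ) < 1/(n+1) := by positivity
        linarith
    exact htend.frequently (Frequently.of_forall hseq)
  exact hHa.eqOn_of_preconnected_of_frequently_eq hGa hP_conn h1P hfreq haP



lemma gamma_poch (z : ℂ) (hz : ∀ j : ℕ, z + j ≠ 0) :
    ∀ n : ℕ, Complex.Gamma (z + n) = (ascPochhammer ℂ n).eval z * Complex.Gamma z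
  | 0 => by simp
  | (n+1) => by
    have h1 : z + ((n+1 : ℕ) : ℂ) = (z + n) + 1 := by push_cast; ring
    rw [h1, Complex.Gamma_add_one _ (hz n), gamma_poch z hz n, ascPochhammer_succ_eval]
    ring

theorem stmt7 (h : ℂ) (k : ℕ) (hk : 1 ≤ k)
    (h1 : -(1/2) < h.re) (h2 : h.re < ((k : ℝ) - 1)/2)
    (h3 : ∀ n : ℤ, 2*h ≠ (n : ℂ)) :
    ∫ x in Set.Ioi (0:ℝ), (x : ℂ) ^ (2*h) / (1 - Complex.I * x) ^ k =
      -Complex.I * Real.pi * Complex.exp (Complex.I * Real.pi * h) *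
        (ascPochhammer ℂ (k-1)).eval (-2*h) /
        ((Nat.factorial (k-1) : ℂ) * Complex.sin (2 * Real.pi * h)) := by
  obtain ⟨n, rfl⟩ : ∃ n, k = n + 1 := ⟨k - 1, (Nat.succ_pred_eq_of_pos hk).symm⟩
  set u : ℂ := 2*h + 1 with hu_def
  have hure : u.re = 2*h.re + 1 := by
    rw [hu_def]; simp [Complex.add_re, Complex.mul_re]
  have hu : 0 < u.re := by rw [hure]; linarith
  have huk : u.re < ((n+1 : ℕ) : ℝ) := by rw [hure]; push_cast at h2 ⊢; linarith
  -- rewrite LHS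
  have hLHS : ∫ x in Set.Ioi (0:ℝ), (x : ℂ) ^ (2*h) / (1 - Complex.I * x) ^ (n+1) =
      ∫ x in Set.Ioi (0:ℝ), (x:ℂ)^(u-1) / (1 + (-Complex.I)*x) ^ (n+1) := by
    apply setIntegral_congr_fun measurableSet_Ioi
    intro x hx
    have e1 : u - 1 = 2*h := by rw [hu_def]; ring
    have e2 : (1:ℂ) + (-Complex.I)*x = 1 - Complex.I*x := by ring
    dsimp only
    rw [e1, e2]
  have haI : 1/4 < (-Complex.I).re ∨ (-Complex.I).im < -(1/4) := by
    right; simp; norm_num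
  have hglob := aux_glob u (n+1) hu huk haI
  -- Gamma facts
  have hΓfac : Complex.Gamma ((n+1 : ℕ) : ℂ) = (Nat.factorial n : ℂ) := by
    have := Complex.Gamma_nat_eq_factorial n
    rw [← this]; congr 1; push_cast; ring
  have hz : ∀ j : ℕ, -2*h + (j:ℂ) ≠ 0 := by
    intro j hc
    apply h3 j
    have : 2*h = (j:ℂ) := by linear_combination -hc
    exact this
  have hΓku : Complex.Gamma (((n+1 : ℕ) : ℂ) - u) =
      (ascPochhammer ℂ n).eval (-2*h) * Complex.Gamma (-2*h) := by
    have e : ((n+1 : ℕ) : ℂ) - u = (-2*h) + (n : ℂ) := by rw [hu_def]; push_cast; ring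
    rw [e, gamma_poch (-2*h) hz n]
  have hrefl : Complex.Gamma (-2*h) * Complex.Gamma u = ↑Real.pi / Complex.sin (Real.pi * (-2*h)) := by
    have := Complex.Gamma_mul_Gamma_one_sub (-2*h)
    rw [show (1:ℂ) - (-2*h) = u by rw [hu_def]; ring] at this
    exact this
  have hsin_neg : Complex.sin ((Real.pi : ℂ) * (-2*h)) = - Complex.sin (2 * Real.pi * h) := by
    rw [show ((Real.pi : ℂ)) * (-2*h) = -(2 * Real.pi * h) by ring, Complex.sin_neg]
  have hsin_ne : Complex.sin (2 * Real.pi * h) ≠ 0 := by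
    intro hc
    rw [Complex.sin_eq_zero_iff] at hc
    obtain ⟨m, hm⟩ := hc
    apply h3 m
    have hπ : ((Real.pi : ℂ)) ≠ 0 := Complex.ofReal_ne_zero.2 Real.pi_ne_zero
    have : 2 * h * (Real.pi:ℂ) = (m:ℂ) * Real.pi := by linear_combination hm
    exact mul_right_cancel₀ hπ this
  -- (-I)^(-u)
  have hIpow : (-Complex.I) ^ (-u) = Complex.I * Complex.exp (Complex.I * Real.pi * h) := by
    rw [Complex.cpow_def_of_ne_zero (by simp [Complex.I_ne_zero]) (-u), Complex.log_neg_I]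
    have e : -((Real.pi:ℂ)/2) * Complex.I * (-u) =
        Complex.I * (Real.pi:ℂ) * h + (Real.pi:ℂ)/2 * Complex.I := by
      rw [hu_def]; ring
    rw [e, Complex.exp_add]
    have e2 : Complex.exp ((Real.pi:ℂ)/2 * Complex.I) = Complex.I := by
      rw [Complex.exp_mul_I]
      simp [Complex.cos_pi_div_two, Complex.sin_pi_div_two]
    rw [e2]; ring
  -- assemble
  rw [hLHS, hglob, hΓfac, hΓku, hIpow]
  have hfac_ne : ((Nat.factorial n : ℂ)) ≠ 0 := by
    exact_mod_cast Nat.cast_ne_zero.2 (Nat.factorial_ne_zero n)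
  have hπ : ((Real.pi : ℂ)) ≠ 0 := Complex.ofReal_ne_zero.2 Real.pi_ne_zero
  rw [show (n+1) - 1 = n from rfl]
  have key : Complex.Gamma u * ((ascPochhammer ℂ n).eval (-2*h) * Complex.Gamma (-2*h)) =
      (ascPochhammer ℂ n).eval (-2*h) * (↑Real.pi / (- Complex.sin (2 * Real.pi * h))) := by
    rw [show Complex.Gamma u * ((ascPochhammer ℂ n).eval (-2*h) * Complex.Gamma (-2*h)) =
      (ascPochhammer ℂ n).eval (-2*h) * (Complex.Gamma (-2*h) * Complex.Gamma u) by ring,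
      hrefl, hsin_neg]
  rw [key]
  field_simp
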